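/- Let A : ℝ × ℝ → Matrix (n×n, ℝ) be twice continuously differentiable in (λ, ν), and set d(λ, ν) = det A(λ, ν). Fix ν₀ ∈ ℝ and write A⁰ = A(0, ν₀), A¹⁰ = ∂_λA(0, ν₀), A⁰¹ = ∂_νA(0, ν₀), A⁰² = (1/2)∂²_{νν}A(0, ν₀). Assume: ker A⁰ is one-dimensional and spanned by u₀ ≠ 0; e_ad ≠ 0 spans ker (A⁰)ᵀ; u₁ ∈ ℝⁿ satisfies A⁰¹u₀ + A⁰u₁ = 0; and κ ≠ 0 is the scalar with adj(A⁰) = κ·u₀e_adᵀ. Then ∂_λd(0, ν₀) = κ·⟨A¹⁰u₀, e_ad⟩ and ∂²_{νν}d(0, ν₀) = 2κ·⟨A⁰²u₀ + A⁰¹u₁, e_ad⟩. -/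

import Mathlib

open Matrix

lemma contDiff_det_aux {n : ℕ} {k : WithTop ℕ∞} {f : ℝ → Matrix (Fin n) (Fin n) ℝ}
    (hf : ∀ i j, ContDiff ℝ k (fun x => f x i j)) :
    ContDiff ℝ k (fun x => (f x).det) := by
  have h : (fun x => (f x).det) = fun x => ∑ σ : Equiv.Perm (Fin n),
      ((Equiv.Perm.sign σ : ℤ) : ℝ) * ∏ i, f x (σ i) i := by
    funext x; rw [Matrix.det_apply']
  rw [h]
  exact ContDiff.sum fun σ _ => contDiff_const.mul (contDiff_prod fun i _ => hf (σ i) i)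

lemma contDiff_adjugate_aux {n : ℕ} {k : WithTop ℕ∞} {f : ℝ → Matrix (Fin n) (Fin n) ℝ}
    (hf : ∀ i j, ContDiff ℝ k (fun x => f x i j)) (i j : Fin n) :
    ContDiff ℝ k (fun x => (f x).adjugate i j) := by
  simp only [Matrix.adjugate_apply]
  apply contDiff_det_aux
  intro a b
  rcases eq_or_ne a j with h | h
  · simp only [Matrix.updateRow_apply, h, if_pos rfl]
    exact contDiff_const
  · simp only [Matrix.updateRow_apply, if_neg h]
    exact hf a b

lemma hasDerivAt_det_aux {n : ℕ} {f : ℝ → Matrix (Fin n) (Fin n) ℝ}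
    {M' : Matrix (Fin n) (Fin n) ℝ} {x : ℝ}
    (hf : ∀ i j, HasDerivAt (fun t => f t i j) (M' i j) x) :
    HasDerivAt (fun t => (f t).det) (((f x).adjugate * M').trace) x := by
  have h1 : ∀ σ : Equiv.Perm (Fin n), HasDerivAt (fun t => ∏ i, f t (σ i) i)
      (∑ i, (∏ j ∈ Finset.univ.erase i, f x (σ j) j) * M' (σ i) i) x := by
    intro σ
    have := HasDerivAt.fun_finsetProd (u := Finset.univ)
      (f := fun (i : Fin n) (t : ℝ) => f t (σ i) i) (f' := fun i => M' (σ i) i)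
      (x := x) (fun i _ => hf (σ i) i)
    simpa [smul_eq_mul] using this
  have h2 : HasDerivAt (fun t => (f t).det)
      (∑ σ : Equiv.Perm (Fin n), ((Equiv.Perm.sign σ : ℤ) : ℝ) *
        ∑ i, (∏ j ∈ Finset.univ.erase i, f x (σ j) j) * M' (σ i) i) x := by
    have h : (fun t => (f t).det) = fun t => ∑ σ : Equiv.Perm (Fin n),
        ((Equiv.Perm.sign σ : ℤ) : ℝ) * ∏ i, f t (σ i) i := by
      funext t; rw [Matrix.det_apply']
    rw [h]
    exact HasDerivAt.fun_sum fun σ _ => (h1 σ).const_mul _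
  convert h2 using 1
  have key : ∀ i : Fin n,
      ((f x).adjugate *ᵥ (fun k => M' k i)) i
        = ∑ σ : Equiv.Perm (Fin n), ((Equiv.Perm.sign σ : ℤ) : ℝ) *
            (M' (σ i) i * ∏ j ∈ Finset.univ.erase i, f x (σ j) j) := by
    intro i
    rw [← Matrix.cramer_eq_adjugate_mulVec, Matrix.cramer_apply, Matrix.det_apply']
    refine Finset.sum_congr rfl fun σ _ => ?_
    congr 1
    rw [← Finset.mul_prod_erase Finset.univ _ (Finset.mem_univ i)]
    congr 1
    · rw [Matrix.updateCol_apply, if_pos rfl]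
    · exact Finset.prod_congr rfl fun j hj => by
        rw [Matrix.updateCol_apply, if_neg (Finset.ne_of_mem_erase hj)]
  calc ((f x).adjugate * M').trace
      = ∑ i, ((f x).adjugate *ᵥ fun k => M' k i) i := by
        simp [Matrix.trace, Matrix.mul_apply, Matrix.diag, Matrix.mulVec, dotProduct]
    _ = ∑ i, ∑ σ : Equiv.Perm (Fin n), ((Equiv.Perm.sign σ : ℤ) : ℝ) *
            (M' (σ i) i * ∏ j ∈ Finset.univ.erase i, f x (σ j) j) :=
        Finset.sum_congr rfl fun i _ => key i
    _ = ∑ σ : Equiv.Perm (Fin n), ∑ i, ((Equiv.Perm.sign σ : ℤ) : ℝ) *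
            (M' (σ i) i * ∏ j ∈ Finset.univ.erase i, f x (σ j) j) := Finset.sum_comm
    _ = _ := Finset.sum_congr rfl fun σ _ => by
        rw [Finset.mul_sum]; exact Finset.sum_congr rfl fun i _ => by ring

lemma trace_smul_vecMulVec {n : ℕ} (κ : ℝ) (u e : Fin n → ℝ) (C : Matrix (Fin n) (Fin n) ℝ) :
    ((κ • Matrix.vecMulVec u e) * C).trace = κ * ((C *ᵥ u) ⬝ᵥ e) := by
  simp only [Matrix.trace, Matrix.diag, Matrix.mul_apply, Matrix.smul_apply,
    Matrix.vecMulVec_apply, Matrix.mulVec, dotProduct, smul_eq_mul, Finset.mul_sum,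
    Finset.sum_mul]
  rw [Finset.sum_comm]
  exact Finset.sum_congr rfl fun k _ => Finset.sum_congr rfl fun i _ => by ring

lemma iter2_eq (f : ℝ → ℝ) : iteratedDeriv 2 f = deriv (deriv f) := by
  rw [show (2 : ℕ) = 1 + 1 from rfl, iteratedDeriv_succ, iteratedDeriv_one]

lemma deriv_contDiff_one {f : ℝ → ℝ} (hf : ContDiff ℝ 2 f) : ContDiff ℝ 1 (deriv f) := by
  have h2 : ContDiff ℝ (1 + 1) f := by
    rw [show ((1 : WithTop ℕ∞) + 1) = 2 from by norm_num]; exact hf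
  exact (contDiff_succ_iff_deriv.mp h2).2.2

lemma second_deriv_mul {F G : ℝ → ℝ} (hF : ContDiff ℝ 2 F) (hG : ContDiff ℝ 2 G) (x : ℝ) :
    iteratedDeriv 2 (fun y => F y * G y) x
      = iteratedDeriv 2 F x * G x + 2 * (deriv F x * deriv G x) + F x * iteratedDeriv 2 G x := by
  have hF1 : Differentiable ℝ F := hF.differentiable two_ne_zero
  have hG1 : Differentiable ℝ G := hG.differentiable two_ne_zero
  have hdF : Differentiable ℝ (deriv F) := (deriv_contDiff_one hF).differentiable one_ne_zero
  have hdG : Differentiable ℝ (deriv G) := (deriv_contDiff_one hG).differentiable one_ne_zero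
  simp only [iter2_eq]
  have h : deriv (fun y => F y * G y) = fun y => deriv F y * G y + F y * deriv G y :=
    funext fun y => deriv_fun_mul (hF1 y) (hG1 y)
  rw [h, deriv_fun_add (f := fun y => deriv F y * G y) (g := fun y => F y * deriv G y)
      ((hdF x).mul (hG1 x)) ((hF1 x).mul (hdG x)),
    deriv_fun_mul (hdF x) (hG1 x), deriv_fun_mul (hF1 x) (hdG x)]
  ring

lemma second_deriv_sum {ι : Type*} {s : Finset ι} {F : ι → ℝ → ℝ}
    (hF : ∀ i ∈ s, ContDiff ℝ 2 (F i)) (x : ℝ) :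
    iteratedDeriv 2 (fun y => ∑ i ∈ s, F i y) x = ∑ i ∈ s, iteratedDeriv 2 (F i) x := by
  simp only [iter2_eq]
  have h : deriv (fun y => ∑ i ∈ s, F i y) = fun y => ∑ i ∈ s, deriv (F i) y :=
    funext fun y => deriv_fun_sum fun i hi =>
      ((hF i hi).differentiable two_ne_zero).differentiableAt
  rw [h]
  exact deriv_fun_sum fun i hi =>
    ((deriv_contDiff_one (hF i hi)).differentiable one_ne_zero).differentiableAt

/-- At a point with one-dimensional kernel and a Jordan chain, the first
`λ`-derivative and second `ν`-derivative of `d(λ,ν) = det A(λ,ν)` are given by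
`∂_λ d = κ⟨A¹⁰u₀, e_ad⟩` and `∂²_{νν} d = 2κ⟨A⁰²u₀ + A⁰¹u₁, e_ad⟩`. -/
theorem stmt4 (n : ℕ) (A : ℝ → ℝ → Matrix (Fin n) (Fin n) ℝ)
    (hA : ∀ i j : Fin n, ContDiff ℝ 2 (fun p : ℝ × ℝ => A p.1 p.2 i j))
    (ν₀ : ℝ)
    (A0 A10 A01 A02 : Matrix (Fin n) (Fin n) ℝ)
    (hA0 : A0 = A 0 ν₀)
    (hA10 : ∀ i j : Fin n, A10 i j = deriv (fun l : ℝ => A l ν₀ i j) 0)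
    (hA01 : ∀ i j : Fin n, A01 i j = deriv (fun ν : ℝ => A 0 ν i j) ν₀)
    (hA02 : ∀ i j : Fin n, A02 i j = (1/2) * iteratedDeriv 2 (fun ν : ℝ => A 0 ν i j) ν₀)
    (u₀ : Fin n → ℝ) (hu₀ : u₀ ≠ 0)
    (hker : LinearMap.ker A0.mulVecLin = Submodule.span ℝ {u₀})
    (e_ad : Fin n → ℝ) (he : e_ad ≠ 0)
    (hcoker : LinearMap.ker A0.transpose.mulVecLin = Submodule.span ℝ {e_ad})
    (u₁ : Fin n → ℝ) (hu₁ : A01 *ᵥ u₀ + A0 *ᵥ u₁ = 0)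
    (κ : ℝ) (hκ : κ ≠ 0) (hadj : A0.adjugate = κ • Matrix.vecMulVec u₀ e_ad) :
    deriv (fun l : ℝ => (A l ν₀).det) 0 = κ * ((A10 *ᵥ u₀) ⬝ᵥ e_ad) ∧
    iteratedDeriv 2 (fun ν : ℝ => (A 0 ν).det) ν₀
      = 2 * κ * ((A02 *ᵥ u₀ + A01 *ᵥ u₁) ⬝ᵥ e_ad) := by
  -- Basic smoothness of the partial maps
  have hRow : ∀ i j, ContDiff ℝ 2 (fun l : ℝ => A l ν₀ i j) := fun i j =>
    (hA i j).comp (contDiff_id.prodMk contDiff_const)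
  have hCol : ∀ i j, ContDiff ℝ 2 (fun ν : ℝ => A 0 ν i j) := fun i j =>
    (hA i j).comp (contDiff_const.prodMk contDiff_id)
  have hd10 : ∀ i j, HasDerivAt (fun l : ℝ => A l ν₀ i j) (A10 i j) 0 := fun i j => by
    rw [hA10 i j]
    exact ((hRow i j).differentiable two_ne_zero).differentiableAt.hasDerivAt
  have hd01 : ∀ i j, HasDerivAt (fun ν : ℝ => A 0 ν i j) (A01 i j) ν₀ := fun i j => by
    rw [hA01 i j]
    exact ((hCol i j).differentiable two_ne_zero).differentiableAt.hasDerivAt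
  -- Kernel facts
  have hA0u₀ : A0 *ᵥ u₀ = 0 := by
    have h : u₀ ∈ LinearMap.ker A0.mulVecLin := by
      rw [hker]; exact Submodule.mem_span_singleton_self u₀
    simpa using h
  have hA0te : e_ad ᵥ* A0 = 0 := by
    have h : e_ad ∈ LinearMap.ker A0ᵀ.mulVecLin := by
      rw [hcoker]; exact Submodule.mem_span_singleton_self e_ad
    simpa using h
  have hdet0 : A0.det = 0 := by
    rw [← Matrix.exists_mulVec_eq_zero_iff]
    exact ⟨u₀, hu₀, hA0u₀⟩
  -- Part 1
  have part1 : deriv (fun l : ℝ => (A l ν₀).det) 0 = κ * ((A10 *ᵥ u₀) ⬝ᵥ e_ad) := by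
    have h := (hasDerivAt_det_aux (f := fun l => A l ν₀) hd10).deriv
    rw [h, ← hA0, hadj, trace_smul_vecMulVec]
  -- d'(ν₀) = 0 via the Jordan chain condition
  have hD1 : deriv (fun ν : ℝ => (A 0 ν).det) ν₀ = 0 := by
    have h := (hasDerivAt_det_aux (f := fun ν => A 0 ν) hd01).deriv
    rw [h, ← hA0, hadj, trace_smul_vecMulVec]
    have h1 : A01 *ᵥ u₀ = -(A0 *ᵥ u₁) := eq_neg_of_add_eq_zero_left hu₁
    have h2 : (A0 *ᵥ u₁) ⬝ᵥ e_ad = 0 := by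
      rw [dotProduct_comm, Matrix.dotProduct_mulVec, hA0te, zero_dotProduct]
    rw [h1, neg_dotProduct, h2, neg_zero, mul_zero]
  -- Part 2 setup
  obtain ⟨i₀, hi₀⟩ : ∃ i, u₀ i ≠ 0 := Function.ne_iff.mp hu₀
  set w : Fin n → ℝ → ℝ := fun k ν => u₀ k + (ν - ν₀) * u₁ k with hw
  have hw_cd : ∀ k, ContDiff ℝ 2 (w k) := fun k => by
    rw [hw]
    exact contDiff_const.add ((contDiff_id.sub contDiff_const).mul contDiff_const)
  have hw_d : ∀ k ν, HasDerivAt (w k) (u₁ k) ν := fun k ν => by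
    rw [hw]
    simpa using (((hasDerivAt_id ν).sub_const ν₀).mul_const (u₁ k)).const_add (u₀ k)
  have hw_derivν : ∀ k ν, deriv (w k) ν = u₁ k := fun k ν => (hw_d k ν).deriv
  have hw_iter2 : ∀ k ν, iteratedDeriv 2 (w k) ν = 0 := fun k ν => by
    rw [iter2_eq]
    have : deriv (w k) = fun _ => u₁ k := funext fun ν' => hw_derivν k ν'
    rw [this]
    simp
  have hw0 : ∀ k, w k ν₀ = u₀ k := fun k => by rw [hw]; simp
  have hDcd : ContDiff ℝ 2 (fun ν : ℝ => (A 0 ν).det) := contDiff_det_aux hCol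
  have hdetν₀ : (A 0 ν₀).det = 0 := by rw [← hA0]; exact hdet0
  -- LHS of the key identity
  have hL : iteratedDeriv 2 (fun ν => (A 0 ν).det * w i₀ ν) ν₀
      = iteratedDeriv 2 (fun ν : ℝ => (A 0 ν).det) ν₀ * u₀ i₀ := by
    have hm : iteratedDeriv 2 (fun ν => (A 0 ν).det * w i₀ ν) ν₀
        = iteratedDeriv 2 (fun ν : ℝ => (A 0 ν).det) ν₀ * w i₀ ν₀
          + 2 * (deriv (fun ν : ℝ => (A 0 ν).det) ν₀ * deriv (w i₀) ν₀)
          + (A 0 ν₀).det * iteratedDeriv 2 (w i₀) ν₀ :=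
      second_deriv_mul hDcd (hw_cd i₀) ν₀
    rw [hm, hD1, hdetν₀, hw_iter2 i₀ ν₀, hw0 i₀]
    ring
  -- the representation F ν = Σ_j adj(A)_{i₀ j} (A (u₀ + (ν-ν₀)u₁))_j
  have hfrep : (fun ν => (A 0 ν).det * w i₀ ν)
      = fun ν => ∑ j, (A 0 ν).adjugate i₀ j * ∑ k, A 0 ν j k * w k ν := by
    funext ν
    have h : (A 0 ν).adjugate *ᵥ ((A 0 ν) *ᵥ fun k => w k ν)
        = (A 0 ν).det • fun k => w k ν := by
      rw [Matrix.mulVec_mulVec, Matrix.adjugate_mul, Matrix.smul_mulVec,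
        Matrix.one_mulVec]
    have h2 := congrFun h i₀
    simpa [Matrix.mulVec, dotProduct, smul_eq_mul] using h2.symm
  -- facts about the factors
  have hgcd : ∀ j, ContDiff ℝ 2 (fun ν : ℝ => (A 0 ν).adjugate i₀ j) := fun j =>
    contDiff_adjugate_aux hCol i₀ j
  have hg0 : ∀ j, (A 0 ν₀).adjugate i₀ j = κ * (u₀ i₀ * e_ad j) := fun j => by
    rw [← hA0, hadj]; simp [Matrix.vecMulVec_apply]
  have hfcd : ∀ j, ContDiff ℝ 2 (fun ν : ℝ => ∑ k, A 0 ν j k * w k ν) := fun j =>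
    ContDiff.sum fun k _ => (hCol j k).mul (hw_cd k)
  have hf0 : ∀ j, (∑ k, A 0 ν₀ j k * w k ν₀) = 0 := fun j => by
    have h := congrFun hA0u₀ j
    rw [hA0] at h
    simpa [Matrix.mulVec, dotProduct, hw0] using h
  have hfd : ∀ j, deriv (fun ν : ℝ => ∑ k, A 0 ν j k * w k ν) ν₀ = 0 := by
    intro j
    have hder : ∀ k, HasDerivAt (fun ν : ℝ => A 0 ν j k * w k ν)
        (A01 j k * u₀ k + A0 j k * u₁ k) ν₀ := fun k => by
      have h := (hd01 j k).mul (hw_d k ν₀)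
      rw [hw0 k, ← hA0] at h
      exact h
    have hsum := (HasDerivAt.fun_sum (fun k (_ : k ∈ Finset.univ) => hder k)).deriv
    rw [hsum]
    have h := congrFun hu₁ j
    simpa [Matrix.mulVec, dotProduct, Finset.sum_add_distrib] using h
  have hfiter : ∀ j, iteratedDeriv 2 (fun ν : ℝ => ∑ k, A 0 ν j k * w k ν) ν₀
      = 2 * ((A02 *ᵥ u₀) j + (A01 *ᵥ u₁) j) := by
    intro j
    have hsum : iteratedDeriv 2 (fun ν : ℝ => ∑ k, A 0 ν j k * w k ν) ν₀
        = ∑ k, iteratedDeriv 2 (fun ν : ℝ => A 0 ν j k * w k ν) ν₀ :=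
      second_deriv_sum (fun k _ => (hCol j k).mul (hw_cd k)) ν₀
    rw [hsum]
    have hterm : ∀ k, iteratedDeriv 2 (fun ν : ℝ => A 0 ν j k * w k ν) ν₀
        = 2 * (A02 j k * u₀ k) + 2 * (A01 j k * u₁ k) := by
      intro k
      have hm : iteratedDeriv 2 (fun ν : ℝ => A 0 ν j k * w k ν) ν₀
          = iteratedDeriv 2 (fun ν : ℝ => A 0 ν j k) ν₀ * w k ν₀
            + 2 * (deriv (fun ν : ℝ => A 0 ν j k) ν₀ * deriv (w k) ν₀)
            + A 0 ν₀ j k * iteratedDeriv 2 (w k) ν₀ :=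
        second_deriv_mul (hCol j k) (hw_cd k) ν₀
      have h2 : iteratedDeriv 2 (fun ν : ℝ => A 0 ν j k) ν₀ = 2 * A02 j k := by
        rw [hA02 j k]; ring
      rw [hm, h2, hw0 k, hw_derivν k ν₀, (hd01 j k).deriv, hw_iter2 k ν₀]
      ring
    rw [Finset.sum_congr rfl fun k _ => hterm k]
    simp only [Matrix.mulVec, dotProduct, Finset.mul_sum, Finset.sum_add_distrib]
    rw [mul_add, Finset.mul_sum, Finset.mul_sum]
  -- RHS of the key identity
  have hR : iteratedDeriv 2 (fun ν => (A 0 ν).det * w i₀ ν) ν₀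
      = u₀ i₀ * (2 * κ * ((A02 *ᵥ u₀ + A01 *ᵥ u₁) ⬝ᵥ e_ad)) := by
    rw [hfrep]
    have hsum : iteratedDeriv 2
          (fun ν => ∑ j, (A 0 ν).adjugate i₀ j * ∑ k, A 0 ν j k * w k ν) ν₀
        = ∑ j, iteratedDeriv 2
            (fun ν => (A 0 ν).adjugate i₀ j * ∑ k, A 0 ν j k * w k ν) ν₀ :=
      second_deriv_sum (fun j _ => (hgcd j).mul (hfcd j)) ν₀
    rw [hsum]
    have hterm : ∀ j, iteratedDeriv 2
          (fun ν => (A 0 ν).adjugate i₀ j * ∑ k, A 0 ν j k * w k ν) ν₀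
        = u₀ i₀ * (2 * κ * ((A02 *ᵥ u₀ + A01 *ᵥ u₁) j * e_ad j)) := by
      intro j
      have hm : iteratedDeriv 2
            (fun ν => (A 0 ν).adjugate i₀ j * ∑ k, A 0 ν j k * w k ν) ν₀
          = iteratedDeriv 2 (fun ν : ℝ => (A 0 ν).adjugate i₀ j) ν₀
              * (∑ k, A 0 ν₀ j k * w k ν₀)
            + 2 * (deriv (fun ν : ℝ => (A 0 ν).adjugate i₀ j) ν₀
              * deriv (fun ν : ℝ => ∑ k, A 0 ν j k * w k ν) ν₀)
            + (A 0 ν₀).adjugate i₀ j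
              * iteratedDeriv 2 (fun ν : ℝ => ∑ k, A 0 ν j k * w k ν) ν₀ :=
        second_deriv_mul (hgcd j) (hfcd j) ν₀
      rw [hm, hf0 j, hfd j, hfiter j, hg0 j, Pi.add_apply]
      ring
    rw [Finset.sum_congr rfl fun j _ => hterm j, ← Finset.mul_sum, ← Finset.mul_sum]
    rfl
  refine ⟨part1, ?_⟩
  have hcancel : iteratedDeriv 2 (fun ν : ℝ => (A 0 ν).det) ν₀ * u₀ i₀
      = 2 * κ * ((A02 *ᵥ u₀ + A01 *ᵥ u₁) ⬝ᵥ e_ad) * u₀ i₀ := by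
    rw [← hL, hR]; ring
  exact mul_right_cancel₀ hi₀ hcancel
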